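/- Consider the three involutive bijections of ℂ² given by s₁(α, β) = (β, α), s₂(α, β) = (−α−2, −β−2), and s₃(α, β) = (α, −α−β−3). The subgroup of the group of bijections of ℂ² generated by s₁, s₂, s₃ is isomorphic to the dihedral group of order 12 (the symmetry group of a regular hexagon). -/

import Mathlib

/-- The involution `s₁(α, β) = (β, α)` of the parameter plane `ℂ²`. -/
def s₁ : Equiv.Perm (ℂ × ℂ) :=
  Function.Involutive.toPerm (fun p => (p.2, p.1)) (fun p => rfl)

/-- The involution `s₂(α, β) = (−α−2, −β−2)` of the parameter plane `ℂ²`. -/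
def s₂ : Equiv.Perm (ℂ × ℂ) :=
  Function.Involutive.toPerm (fun p => (-p.1 - 2, -p.2 - 2))
    (fun p => by ext <;> simp <;> ring)

/-- The involution `s₃(α, β) = (α, −α−β−3)` of the parameter plane `ℂ²`. -/
def s₃ : Equiv.Perm (ℂ × ℂ) :=
  Function.Involutive.toPerm (fun p => (p.1, -p.1 - p.2 - 3))
    (fun p => by ext <;> simp <;> ring)

noncomputable def ρ : Equiv.Perm (ℂ × ℂ) := s₂ * s₁ * s₃

lemma ρ_apply (p : ℂ × ℂ) : ρ p = (p.1 + p.2 + 1, -p.1 - 2) := by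
  simp [ρ, s₁, s₂, s₃, Equiv.Perm.mul_apply, Function.Involutive.toPerm]; ring

lemma σ_apply (p : ℂ × ℂ) : s₁ p = (p.2, p.1) := rfl

lemma hρ6 : ρ ^ 6 = 1 := by
  ext p <;> simp [pow_succ, Equiv.Perm.mul_apply, ρ_apply] <;> ring

lemma hσσ : s₁ * s₁ = 1 := by
  ext p <;> simp [Equiv.Perm.mul_apply, σ_apply]

lemma hρσ : ρ * s₁ = s₁ * ρ ^ 5 := by
  ext p <;> simp [pow_succ, Equiv.Perm.mul_apply, ρ_apply, σ_apply] <;> ring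

lemma hmod (a : ℕ) : ρ ^ a = ρ ^ (a % 6) := by
  conv_lhs => rw [← Nat.div_add_mod a 6]
  rw [pow_add, pow_mul, hρ6, one_pow, one_mul]

lemma hpowσ (k : ℕ) : ρ ^ k * s₁ = s₁ * ρ ^ (5 * k) := by
  induction k with
  | zero => simp
  | succ n ih =>
    rw [pow_succ, mul_assoc, hρσ, ← mul_assoc, ih, mul_assoc, ← pow_add,
      show 5 * n + 5 = 5 * (n + 1) from by ring]

noncomputable def φfun : DihedralGroup 6 → Equiv.Perm (ℂ × ℂ)
  | .r i => ρ ^ i.val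
  | .sr i => s₁ * ρ ^ i.val

lemma hdec1 : ∀ i j : ZMod 6, (i.val + j.val) % 6 = (i + j).val % 6 := by decide
lemma hdec2 : ∀ i j : ZMod 6, (5 * i.val + j.val) % 6 = (j - i).val % 6 := by decide

lemma φmul : ∀ a b, φfun (a * b) = φfun a * φfun b := by
  have key : ∀ (a : ℕ) (j : ZMod 6), a % 6 = j.val % 6 → ρ ^ a = ρ ^ j.val := by
    intro a j h; rw [hmod a, h, ← hmod]
  rintro (i | i) (j | j) <;>
    simp only [DihedralGroup.r_mul_r, DihedralGroup.r_mul_sr, DihedralGroup.sr_mul_r,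
      DihedralGroup.sr_mul_sr, φfun]
  · rw [← pow_add]; exact (key _ _ (hdec1 i j)).symm
  · rw [← mul_assoc, hpowσ, mul_assoc, ← pow_add]
    congr 1
    exact (key _ _ (hdec2 i j)).symm
  · rw [mul_assoc, ← pow_add]
    congr 1
    exact (key _ _ (hdec1 i j)).symm
  · have h1 : s₁ * ρ ^ i.val * (s₁ * ρ ^ j.val) = s₁ * (ρ ^ i.val * s₁) * ρ ^ j.val := by
      simp [mul_assoc]
    rw [h1, hpowσ, show s₁ * (s₁ * ρ ^ (5 * i.val)) = s₁ * s₁ * ρ ^ (5 * i.val) from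
      (mul_assoc _ _ _).symm, hσσ, one_mul, ← pow_add]
    exact (key _ _ (hdec2 i j)).symm

noncomputable def φ : DihedralGroup 6 →* Equiv.Perm (ℂ × ℂ) where
  toFun := φfun
  map_one' := by rw [DihedralGroup.one_def]; show ρ ^ (0 : ZMod 6).val = 1; simp
  map_mul' := φmul

lemma hker_r : ∀ k : ℕ, k < 6 → ρ ^ k = 1 → k = 0 := by
  intro k hk h
  interval_cases k <;>
    first
      | rfl
      | (have := Equiv.ext_iff.mp h ((0 : ℂ), (0 : ℂ))
         simp only [pow_succ, pow_zero, one_mul, Equiv.Perm.mul_apply, ρ_apply,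
           Equiv.Perm.coe_one, id_eq, Prod.ext_iff] at this
         norm_num at this)

lemma hker_sr : ∀ k : ℕ, k < 6 → s₁ * ρ ^ k ≠ 1 := by
  intro k hk h
  interval_cases k <;>
    first
      | (have := Equiv.ext_iff.mp h ((1 : ℂ), (0 : ℂ))
         simp only [pow_succ, pow_zero, one_mul, mul_one, Equiv.Perm.mul_apply, ρ_apply,
           σ_apply, Equiv.Perm.coe_one, id_eq, Prod.ext_iff] at this
         norm_num at this)
      | (have := Equiv.ext_iff.mp h ((0 : ℂ), (0 : ℂ))
         simp only [pow_succ, pow_zero, one_mul, mul_one, Equiv.Perm.mul_apply, ρ_apply,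
           σ_apply, Equiv.Perm.coe_one, id_eq, Prod.ext_iff] at this
         norm_num at this)

lemma φ_inj : Function.Injective φ := by
  rw [injective_iff_map_eq_one]
  rintro (i | i) h
  · have hi : ρ ^ i.val = 1 := h
    have h0 : i.val = 0 := hker_r _ (ZMod.val_lt i) hi
    rw [show DihedralGroup.r i = DihedralGroup.r 0 from by
      congr 1; exact (ZMod.val_eq_zero i).mp h0]
    rfl
  · exact absurd h (hker_sr _ (ZMod.val_lt i))

lemma hρ3 : ρ ^ 3 = s₂ := by
  ext p <;> simp [pow_succ, Equiv.Perm.mul_apply, ρ_apply, s₂, Function.Involutive.toPerm] <;> ring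

lemma hs₃ : s₁ * ρ ^ 4 = s₃ := by
  ext p <;> simp [pow_succ, Equiv.Perm.mul_apply, ρ_apply, σ_apply, s₃, Function.Involutive.toPerm] <;> ring

lemma φ_range : φ.range = Subgroup.closure ({s₁, s₂, s₃} : Set (Equiv.Perm (ℂ × ℂ))) := by
  apply le_antisymm
  · rintro x ⟨g, rfl⟩
    have hσ : s₁ ∈ Subgroup.closure ({s₁, s₂, s₃} : Set (Equiv.Perm (ℂ × ℂ))) :=
      Subgroup.subset_closure (by simp)
    have hρ : ρ ∈ Subgroup.closure ({s₁, s₂, s₃} : Set (Equiv.Perm (ℂ × ℂ))) := by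
      refine mul_mem (mul_mem ?_ hσ) ?_ <;> exact Subgroup.subset_closure (by simp)
    cases g with
    | r i => exact pow_mem hρ _
    | sr i => exact mul_mem hσ (pow_mem hρ _)
  · rw [Subgroup.closure_le]
    rintro x (rfl | rfl | rfl)
    · exact ⟨.sr 0, by show s₁ * ρ ^ (0 : ZMod 6).val = s₁; simp⟩
    · exact ⟨.r 3, by show ρ ^ (3 : ZMod 6).val = s₂; rw [show (3 : ZMod 6).val = 3 from rfl, hρ3]⟩
    · exact ⟨.sr 4,
        by show s₁ * ρ ^ (4 : ZMod 6).val = s₃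
           rw [show (4 : ZMod 6).val = 4 from rfl, hs₃]⟩


/-- The subgroup of bijections of `ℂ²` generated by `s₁, s₂, s₃` is isomorphic
to the dihedral group of order 12 (the symmetry group of a regular hexagon). -/
theorem generated_group_is_dihedral :
    Nonempty ((Subgroup.closure ({s₁, s₂, s₃} : Set (Equiv.Perm (ℂ × ℂ)))) ≃* DihedralGroup 6) := by
  exact ⟨(MulEquiv.subgroupCongr φ_range.symm).trans (MonoidHom.ofInjective φ_inj).symm⟩
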